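/- Let $\alpha, \alpha' \in \binom{[m+p]}{p}$ satisfy Pieri's condition: $\alpha'_1 \leq m+p+1-\alpha_p < \alpha'_2 \leq m+p+1-\alpha_{p-1} < \cdots < \alpha'_p \leq m+p+1-\alpha_1$, and let $q := mp - |\alpha| - |\alpha'|$ where $|\alpha| = \sum_j(\alpha_j - j)$. Let $N \subseteq \mathbb{C}^{m+p}$ be a linear subspace of dimension $m+1-q$ none of whose Plücker coordinates vanish (i.e., the projection of $N$ to every coordinate subspace spanned by $m+1-q$ standard basis vectors is an isomorphism). Then with $C := C_1 \oplus \cdots \oplus C_p$ where $C_j = \langle e_{\alpha'_j}, \dots, e_{\alpha^\vee_j}\rangle$ and $\alpha^\vee_j = m+p+1-\alpha_{p+1-j}$, the intersection $C \cap N$ is one-dimensional. -/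

import Mathlib

private lemma gauss_fin (p : ℕ) : 2 * (∑ j : Fin p, (((j : ℕ) : ℤ) + 1)) = p * (p + 1) := by
  induction p with
  | zero => simp
  | succ n ih =>
    rw [Fin.sum_univ_castSucc]
    push_cast
    push_cast at ih
    simp only [Fin.coe_castSucc] at *
    linarith

private lemma sum_rev (p : ℕ) (f : Fin p → ℤ) : ∑ j : Fin p, f (Fin.rev j) = ∑ j : Fin p, f j :=
  Fintype.sum_equiv Fin.revPerm _ _ (fun _ => rfl)



/-- If `α, α'` satisfy Pieri's condition, `q = mp - |α| - |α'|`, and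
`N ⊆ ℂ^{m+p}` has dimension `m+1-q` with no vanishing Plücker coordinate (it meets every
coordinate subspace of complementary dimension trivially), then with
`C = C_1 ⊕ ⋯ ⊕ C_p`, `C_j = ⟨e_{α'_j},…,e_{α^∨_j}⟩`, the intersection `C ∩ N` is
one-dimensional. -/
theorem stmt_9 (m p q : ℕ) (hp : 1 ≤ p) (hq1 : 1 ≤ q) (hqm : q ≤ m)
    (α α' : Fin p → ℕ)
    (hα : StrictMono α) (hα' : StrictMono α')
    (hα1 : ∀ j, 1 ≤ α j) (hα2 : ∀ j, α j ≤ m + p)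
    (hα'1 : ∀ j, 1 ≤ α' j) (hα'2 : ∀ j, α' j ≤ m + p)
    (αv : Fin p → ℕ) (hαv : ∀ j, αv j = m + p + 1 - α (Fin.rev j))
    -- Pieri's condition (3.1):
    (hpieri1 : ∀ k : Fin p, α' k ≤ αv k)
    (hpieri2 : ∀ k : Fin p, ∀ h : (k : ℕ) + 1 < p, αv k < α' ⟨(k : ℕ) + 1, h⟩)
    -- q = mp - |α| - |α'|:
    (hcodim : (∑ j : Fin p, ((α j : ℤ) - ((j : ℕ) + 1)))
        + (∑ j : Fin p, ((α' j : ℤ) - ((j : ℕ) + 1))) + q = m * p)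
    (N : Submodule ℂ (Fin (m + p) → ℂ))
    (hNdim : Module.finrank ℂ ↥N = m + 1 - q)
    (hNgen : ∀ S : Finset (Fin (m + p)), S.card = m + 1 - q →
      ∀ v ∈ N, (∀ i ∈ S, v i = 0) → v = 0)
    (C : Submodule ℂ (Fin (m + p) → ℂ))
    (hC : C = Submodule.span ℂ
      {v | ∃ i : Fin (m + p), (∃ j : Fin p, α' j ≤ (i : ℕ) + 1 ∧ (i : ℕ) + 1 ≤ αv j) ∧
        v = Pi.single i (1 : ℂ)}) :
    Module.finrank ℂ ↥(C ⊓ N) = 1 := by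
  classical
  have hαv_le : ∀ j, αv j ≤ m + p := by
    intro j; have := hα1 (Fin.rev j); rw [hαv j]; omega
  have key : ∀ j k : Fin p, j < k → αv j < α' k := by
    intro j k hjk
    have hjk' : (j : ℕ) < (k : ℕ) := hjk
    have h1 : (j : ℕ) + 1 < p := lt_of_le_of_lt (by omega) k.isLt
    refine lt_of_lt_of_le (hpieri2 j h1) (hα'.monotone ?_)
    simp only [Fin.le_def]
    omega
  set P : Fin (m + p) → Prop :=
    fun i => ∃ j : Fin p, α' j ≤ (i : ℕ) + 1 ∧ (i : ℕ) + 1 ≤ αv j with hP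
  set T : Finset (Fin (m + p)) := Finset.univ.filter P with hT
  -- cardinality of T
  have hcardT : T.card = p + q := by
    have hbij : T.card
        = (Finset.univ.biUnion fun j : Fin p => Finset.Ico (α' j - 1) (αv j)).card := by
      refine Finset.card_bij (fun i _ => (i : ℕ)) ?_ ?_ ?_
      · intro i hi
        simp only [hT, Finset.mem_filter, Finset.mem_univ, true_and] at hi
        obtain ⟨j, h1, h2⟩ := hi
        simp only [Finset.mem_biUnion, Finset.mem_Ico]
        exact ⟨j, Finset.mem_univ j, by omega, by omega⟩
      · intro i _ i' _ h; exact Fin.ext h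
      · intro n hn
        simp only [Finset.mem_biUnion, Finset.mem_Ico] at hn
        obtain ⟨j, _, h1, h2⟩ := hn
        have hn' : n < m + p := lt_of_lt_of_le h2 (hαv_le j)
        refine ⟨⟨n, hn'⟩, ?_, rfl⟩
        simp only [hT, Finset.mem_filter, Finset.mem_univ, true_and]
        exact ⟨j, by have := hα'1 j; simp only []; omega, by simp only []; omega⟩
    rw [hbij, Finset.card_biUnion]
    · have hterm : ∀ j : Fin p, (Finset.Ico (α' j - 1) (αv j)).card = αv j - (α' j - 1) :=
        fun j => Nat.card_Ico _ _
    -- cast to ℤ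
      have hcast : ((∑ j : Fin p, (Finset.Ico (α' j - 1) (αv j)).card : ℕ) : ℤ) = p + q := by
        push_cast
        have : ∀ j : Fin p, ((Finset.Ico (α' j - 1) (αv j)).card : ℤ)
            = ((m : ℤ) + p + 2) - α (Fin.rev j) - α' j := by
          intro j
          rw [hterm j]
          have h1 : 1 ≤ α' j := hα'1 j
          have h2 : α' j - 1 ≤ αv j := le_trans (by omega) (hpieri1 j)
          have h3 : α (Fin.rev j) ≤ m + p := hα2 _
          have h4 : αv j = m + p + 1 - α (Fin.rev j) := hαv j
          omega
        rw [Finset.sum_congr rfl (fun j _ => this j)]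
        have hA : ∑ j : Fin p, (((m : ℤ) + p + 2) - α (Fin.rev j) - α' j)
            = p * ((m : ℤ) + p + 2) - (∑ j : Fin p, (α (Fin.rev j) : ℤ))
              - (∑ j : Fin p, (α' j : ℤ)) := by
          rw [Finset.sum_sub_distrib, Finset.sum_sub_distrib, Finset.sum_const]
          simp only [Finset.card_univ, Fintype.card_fin, nsmul_eq_mul]
        rw [hA, sum_rev p (fun j => (α j : ℤ))]
        have hg := gauss_fin p
        have hc1 : ∑ j : Fin p, ((α j : ℤ) - ((j : ℕ) + 1))
            = (∑ j : Fin p, (α j : ℤ)) - ∑ j : Fin p, (((j : ℕ) : ℤ) + 1) := by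
          rw [Finset.sum_sub_distrib]
        have hc2 : ∑ j : Fin p, ((α' j : ℤ) - ((j : ℕ) + 1))
            = (∑ j : Fin p, (α' j : ℤ)) - ∑ j : Fin p, (((j : ℕ) : ℤ) + 1) := by
          rw [Finset.sum_sub_distrib]
        rw [hc1, hc2] at hcodim
        linarith
      exact_mod_cast hcast
    · intro j _ k _ hjk
      rw [Function.onFun, Finset.disjoint_left]
      intro n hn hn'
      simp only [Finset.mem_Ico] at hn hn'
      rcases lt_or_gt_of_ne hjk with h | h
      · have := key j k h; have := hα'1 k; omega
      · have := key k j h; have := hα'1 j; omega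
  -- finrank C = p + q
  have hTs : ({v | ∃ i : Fin (m + p), P i ∧ v = Pi.single i (1 : ℂ)} : Set (Fin (m+p) → ℂ))
      = ↑(T.image fun i => (Pi.single i (1 : ℂ) : Fin (m + p) → ℂ)) := by
    ext v
    simp only [Set.mem_setOf_eq, Finset.coe_image, Set.mem_image, Finset.mem_coe, hT,
      Finset.mem_filter, Finset.mem_univ, true_and]
    constructor
    · rintro ⟨i, hi, rfl⟩; exact ⟨i, hi, rfl⟩
    · rintro ⟨i, hi, rfl⟩; exact ⟨i, hi, rfl⟩
  have hCspan : C = Submodule.span ℂ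
      ↑(T.image fun i => (Pi.single i (1 : ℂ) : Fin (m + p) → ℂ)) := by
    rw [hC, ← hTs]
  have hsingle_inj : Set.InjOn (fun i : Fin (m+p) => (Pi.single i (1 : ℂ) : Fin (m + p) → ℂ)) T := by
    intro i _ i' _ h
    by_contra hne
    have h2 := congrFun h i
    simp only [Pi.single_eq_same, Pi.single_apply] at h2
    rw [if_neg (fun hh : i = i' => hne hh)] at h2
    exact one_ne_zero h2
  have hcard_img : (T.image fun i => (Pi.single i (1 : ℂ) : Fin (m + p) → ℂ)).card = p + q := by
    rw [Finset.card_image_of_injOn hsingle_inj, hcardT]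
  have hli : LinearIndependent ℂ
      (Subtype.val : ↥(↑(T.image fun i => (Pi.single i (1 : ℂ) : Fin (m + p) → ℂ)) : Set (Fin (m+p) → ℂ)) → (Fin (m+p) → ℂ)) := by
    have hb : LinearIndependent ℂ (fun i : Fin (m+p) => (Pi.single i (1 : ℂ) : Fin (m + p) → ℂ)) := by
      have hli0 := (Pi.basisFun ℂ (Fin (m+p))).linearIndependent
      have he : ⇑(Pi.basisFun ℂ (Fin (m+p))) = fun i => (Pi.single i (1:ℂ) : Fin (m+p) → ℂ) :=
        funext fun i => Pi.basisFun_apply ℂ (Fin (m+p)) i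
      rwa [he] at hli0
    refine LinearIndepOn.mono ((linearIndepOn_id_range_iff hb.injective).2 hb) ?_
    rw [← hTs]
    rintro v ⟨i, _, rfl⟩
    exact ⟨i, rfl⟩
  have hCdim : Module.finrank ℂ ↥C = p + q := by
    rw [hCspan, finrank_span_finset_eq_card hli, hcard_img]
  -- support of elements of C
  have hCsupp : ∀ v ∈ C, ∀ i : Fin (m + p), ¬ P i → v i = 0 := by
    intro v hv
    have hle : C ≤ Submodule.pi {i | ¬ P i} (fun _ => (⊥ : Submodule ℂ ℂ)) := by
      rw [hC, Submodule.span_le]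
      rintro w ⟨i, hi, rfl⟩
      intro i' hi'
      simp only [Submodule.mem_bot]
      have : i' ≠ i := by rintro rfl; exact hi' hi
      exact Pi.single_eq_of_ne this 1
    intro i hi
    have := hle hv i hi
    simpa using this
  -- lower bound
  have hfr : Module.finrank ℂ (Fin (m + p) → ℂ) = m + p := Module.finrank_fin_fun ℂ
  have h1 := Submodule.finrank_sup_add_finrank_inf_eq C N
  have h2 : Module.finrank ℂ ↥(C ⊔ N) ≤ m + p := by
    have := Submodule.finrank_le (C ⊔ N); rwa [hfr] at this
  have hlow : 1 ≤ Module.finrank ℂ ↥(C ⊓ N) := by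
    rw [hCdim, hNdim] at h1
    omega
  -- upper bound
  have hTne : T.Nonempty := by
    rw [← Finset.card_pos, hcardT]; omega
  obtain ⟨i₀, hi₀⟩ := hTne
  have hi₀P : P i₀ := by
    simpa only [hT, Finset.mem_filter, Finset.mem_univ, true_and] using hi₀
  -- the evaluation map at i₀
  have hinj : Function.Injective
      ((LinearMap.proj i₀ : (Fin (m+p) → ℂ) →ₗ[ℂ] ℂ).comp (C ⊓ N).subtype) := by
    rw [← LinearMap.ker_eq_bot, LinearMap.ker_eq_bot']
    intro v hv
    have hv0 : (v : Fin (m+p) → ℂ) i₀ = 0 := hv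
    have hvC : (v : Fin (m+p) → ℂ) ∈ C := v.2.1
    have hvN : (v : Fin (m+p) → ℂ) ∈ N := v.2.2
    set S : Finset (Fin (m + p)) := insert i₀ Tᶜ with hS
    have hi₀c : i₀ ∉ Tᶜ := by simp only [Finset.mem_compl]; exact fun h => h hi₀
    have hScard : S.card = m + 1 - q := by
      rw [hS, Finset.card_insert_of_notMem hi₀c, Finset.card_compl, hcardT]
      simp only [Fintype.card_fin]
      omega
    have hzero : ∀ i ∈ S, (v : Fin (m+p) → ℂ) i = 0 := by
      intro i hi
      rcases Finset.mem_insert.1 hi with rfl | hi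
      · exact hv0
      · apply hCsupp _ hvC
        intro hPi
        rw [Finset.mem_compl] at hi
        exact hi (by simpa only [hT, Finset.mem_filter, Finset.mem_univ, true_and] using hPi)
    have := hNgen S hScard _ hvN hzero
    exact Subtype.ext this
  have hup : Module.finrank ℂ ↥(C ⊓ N) ≤ 1 := by
    have := LinearMap.finrank_le_finrank_of_injective hinj
    simpa using this
  omega
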